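/- arXiv:2508.17820 — 2 statements merged into one kernel-verified Lean document; each statement's English description precedes it below -/
import Mathlib

section
/- Let L be a positive integer and let ā, b̄, β, δ, c be real numbers with ā > 1, 0 ≤ b̄ < 1, β ≥ 0, δ ≥ 0, c ≥ 0. Let (q_k)_{k≥0} and (e_k)_{k≥0} be sequences of real numbers with q_0 = 0, e_0 = 0, satisfying for every k ≥ 1: q_k ≤ ā·q_{k−1} + c and e_k ≤ b̄·e_{k−1} + β·q_{k−1} + δ. Then e_L ≤ δ·(1 − b̄^L)/(1 − b̄) + β·c·(ā^L − b̄^L)/((ā − b̄)·(ā − 1)). (This is the closed-form solution (54) of the error recursion in Appendix E, the core inequality behind Theorem 1.) -/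
/-- Closed-form solution (54) of the error recursion in Appendix E: if `q 0 = 0`,
`e 0 = 0`, `q (k+1) ≤ ā q k + c` and `e (k+1) ≤ b̄ e k + β q k + δ` for all `k`, with
`ā > 1`, `0 ≤ b̄ < 1`, `β, δ, c ≥ 0`, then
`e L ≤ δ (1 − b̄^L)/(1 − b̄) + β c (ā^L − b̄^L)/((ā − b̄)(ā − 1))`. -/
theorem error_recursion_closed_form
    (L : ℕ) (hL : 0 < L)
    (a b β δ c : ℝ)
    (ha : 1 < a) (hb0 : 0 ≤ b) (hb1 : b < 1) (hβ : 0 ≤ β) (hδ : 0 ≤ δ) (hc : 0 ≤ c)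
    (q e : ℕ → ℝ) (hq0 : q 0 = 0) (he0 : e 0 = 0)
    (hq : ∀ k : ℕ, q (k + 1) ≤ a * q k + c)
    (he : ∀ k : ℕ, e (k + 1) ≤ b * e k + β * q k + δ) :
    e L ≤ δ * (1 - b ^ L) / (1 - b) + β * c * (a ^ L - b ^ L) / ((a - b) * (a - 1)) := by
  have hab : b < a := lt_trans hb1 ha
  have h1b : (0:ℝ) < 1 - b := by linarith
  have hab' : (0:ℝ) < a - b := by linarith
  have ha1 : (0:ℝ) < a - 1 := by linarith
  have key : ∀ k : ℕ, (a - 1) * q k ≤ c * (a ^ k - 1) ∧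
      ((1 - b) * (a - b) * (a - 1)) * e k ≤
        δ * (1 - b ^ k) * ((a - b) * (a - 1)) + β * c * (a ^ k - b ^ k) * (1 - b) := by
    intro k
    induction k with
    | zero => simp [hq0, he0]
    | succ k ih =>
      obtain ⟨ihq, ihe⟩ := ih
      have hbk0 : (0:ℝ) ≤ b ^ k := pow_nonneg hb0 k
      have hbk1 : b ^ k ≤ 1 := pow_le_one₀ hb0 (le_of_lt hb1)
      have hak1 : (1:ℝ) ≤ a ^ k := one_le_pow₀ (le_of_lt ha)
      have hba : b ^ k ≤ a ^ k := pow_le_pow_left₀ hb0 (le_of_lt hab) k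
      constructor
      · have h := hq k
        have : (a - 1) * q (k + 1) ≤ (a - 1) * (a * q k + c) := by
          apply mul_le_mul_of_nonneg_left h (le_of_lt ha1)
        have h2 : a * ((a - 1) * q k) ≤ a * (c * (a ^ k - 1)) :=
          mul_le_mul_of_nonneg_left ihq (by linarith)
        calc (a - 1) * q (k + 1) ≤ (a - 1) * (a * q k + c) := this
          _ = a * ((a - 1) * q k) + (a - 1) * c := by ring
          _ ≤ a * (c * (a ^ k - 1)) + (a - 1) * c := by linarith
          _ = c * (a ^ (k+1) - 1) := by ring
      · have h := he k
        have hD : (0:ℝ) < (1 - b) * (a - b) * (a - 1) := by positivity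
        have step1 : ((1 - b) * (a - b) * (a - 1)) * e (k + 1) ≤
            ((1 - b) * (a - b) * (a - 1)) * (b * e k + β * q k + δ) :=
          mul_le_mul_of_nonneg_left h (le_of_lt hD)
        have h2 : b * (((1 - b) * (a - b) * (a - 1)) * e k) ≤
            b * (δ * (1 - b ^ k) * ((a - b) * (a - 1)) + β * c * (a ^ k - b ^ k) * (1 - b)) :=
          mul_le_mul_of_nonneg_left ihe hb0
        have h3 : (β * (1 - b) * (a - b)) * ((a - 1) * q k) ≤
            (β * (1 - b) * (a - b)) * (c * (a ^ k - 1)) :=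
          mul_le_mul_of_nonneg_left ihq (by positivity)
        have hdrop : (0:ℝ) ≤ β * c * (1 - b) * (a - b) := by positivity
        have expand : ((1 - b) * (a - b) * (a - 1)) * (b * e k + β * q k + δ) =
            b * (((1 - b) * (a - b) * (a - 1)) * e k) +
            (β * (1 - b) * (a - b)) * ((a - 1) * q k) +
            δ * ((1 - b) * (a - b) * (a - 1)) := by ring
        have targetEq : δ * (1 - b ^ (k + 1)) * ((a - b) * (a - 1)) +
              β * c * (a ^ (k + 1) - b ^ (k + 1)) * (1 - b) =
            b * (δ * (1 - b ^ k) * ((a - b) * (a - 1)) + β * c * (a ^ k - b ^ k) * (1 - b)) +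
            (β * (1 - b) * (a - b)) * (c * (a ^ k - 1)) +
            δ * ((1 - b) * (a - b) * (a - 1)) + β * c * (1 - b) * (a - b) := by ring
        rw [targetEq]
        rw [expand] at step1
        linarith [step1, h2, h3, hdrop]
  have hk := (key L).2
  have hD : (0:ℝ) < (1 - b) * (a - b) * (a - 1) := by positivity
  rw [div_add_div _ _ (ne_of_gt h1b) (ne_of_gt (mul_pos hab' ha1)), le_div_iff₀ (by positivity)]
  nlinarith [hk]
end

section
/- Let d and L be positive integers. Let C₁, ΔC₁ and M₁, …, M_L be d×d real matrices and c₂, Δc₂ ∈ ℝ^d vectors. Define vectors q_0 = e_0 = 0 ∈ ℝ^d and, for 1 ≤ k ≤ L, q_k = M_k·(C₁·q_{k−1} + c₂) and e_k = M_k·(C₁ + ΔC₁)·e_{k−1} + M_k·ΔC₁·q_{k−1} + M_k·Δc₂. Suppose there are real numbers m, p, t, d', c, s ≥ 0 with ‖M_k‖₂ ≤ m for all k, ‖C₁‖₂ ≤ p, ‖C₁ + ΔC₁‖₂ ≤ t, ‖ΔC₁‖₂ ≤ d', ‖c₂‖₂ ≤ c, ‖Δc₂‖₂ ≤ s, and suppose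 m·t < 1 < m·p. Then ‖e_L‖₂ ≤ m·s·(1 − (m·t)^L)/(1 − m·t) + m²·d'·c·((m·p)^L − (m·t)^L)/((m·p − m·t)·(m·p − 1)). (This is a deterministic form of Theorem 1: the detection error of the L-block deep unfolded detector under perturbations ΔC₁ of the channel-dependent matrix and Δc₂ of the constant term.) -/
open Matrix
open scoped Matrix.Norms.L2Operator

/-- The Euclidean (ℓ²) norm of a real vector. -/
noncomputable def euclNorm {ι : Type*} [Fintype ι] (v : ι → ℝ) : ℝ :=
  ‖(EuclideanSpace.equiv ι ℝ).symm v‖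

lemma euclNorm_nonneg {ι : Type*} [Fintype ι] (v : ι → ℝ) : 0 ≤ euclNorm v := norm_nonneg _

lemma euclNorm_zero {ι : Type*} [Fintype ι] : euclNorm (0 : ι → ℝ) = 0 := by
  simp [euclNorm]

lemma euclNorm_add_le {ι : Type*} [Fintype ι] (u v : ι → ℝ) :
    euclNorm (u + v) ≤ euclNorm u + euclNorm v := by
  simpa [euclNorm] using
    norm_add_le ((EuclideanSpace.equiv ι ℝ).symm u) ((EuclideanSpace.equiv ι ℝ).symm v)

lemma euclNorm_mulVec {n m : ℕ} (A : Matrix (Fin m) (Fin n) ℝ) (v : Fin n → ℝ) :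
    euclNorm (A.mulVec v) ≤ ‖A‖ * euclNorm v :=
  A.l2_opNorm_mulVec ((EuclideanSpace.equiv (Fin n) ℝ).symm v)

/-- Theorem 1 (deterministic form): detection error of the `L`-block deep unfolded
detector. With block maps `q_k = M_k (C₁ q_{k−1} + c₂)` and error recursion
`e_k = M_k (C₁+ΔC₁) e_{k−1} + M_k ΔC₁ q_{k−1} + M_k Δc₂`, under the stated norm
bounds and `m t < 1 < m p`, the final error satisfies
`‖e_L‖₂ ≤ m s (1 − (m t)^L)/(1 − m t) + m² d' c ((m p)^L − (m t)^L)/((m p − m t)(m p − 1))`. -/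
theorem deep_unfolded_detection_error
    (d L : ℕ) (hd : 0 < d) (hL : 0 < L)
    (C₁ ΔC₁ : Matrix (Fin d) (Fin d) ℝ)
    (M : Fin L → Matrix (Fin d) (Fin d) ℝ)
    (c₂ Δc₂ : Fin d → ℝ)
    (q e : ℕ → Fin d → ℝ)
    (hq0 : q 0 = 0) (he0 : e 0 = 0)
    (hq : ∀ k : Fin L, q ((k : ℕ) + 1) = (M k).mulVec (C₁.mulVec (q (k : ℕ)) + c₂))
    (he : ∀ k : Fin L, e ((k : ℕ) + 1) =
      (M k * (C₁ + ΔC₁)).mulVec (e (k : ℕ)) + (M k * ΔC₁).mulVec (q (k : ℕ))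
        + (M k).mulVec Δc₂)
    (m p t d' c s : ℝ)
    (hm : 0 ≤ m) (hp : 0 ≤ p) (ht : 0 ≤ t) (hd' : 0 ≤ d') (hc : 0 ≤ c) (hs : 0 ≤ s)
    (hM : ∀ k : Fin L, ‖M k‖ ≤ m)
    (hC₁ : ‖C₁‖ ≤ p) (hCt : ‖C₁ + ΔC₁‖ ≤ t) (hΔC₁ : ‖ΔC₁‖ ≤ d')
    (hc₂ : euclNorm c₂ ≤ c) (hΔc₂ : euclNorm Δc₂ ≤ s)
    (hmt : m * t < 1) (hmp : 1 < m * p) :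
    euclNorm (e L) ≤
      m * s * (1 - (m * t) ^ L) / (1 - m * t) +
        m ^ 2 * d' * c * ((m * p) ^ L - (m * t) ^ L) / ((m * p - m * t) * (m * p - 1)) := by
  set a := m * p with ha_def
  set b := m * t with hb_def
  have hb0 : 0 ≤ b := mul_nonneg hm ht
  have h1b : 0 < 1 - b := by linarith
  have ha1 : 0 < a - 1 := by linarith
  have hab : 0 < a - b := by linarith
  have main : ∀ k, k ≤ L →
      euclNorm (q k) ≤ m * c * (a ^ k - 1) / (a - 1) ∧
      euclNorm (e k) ≤ m * s * (1 - b ^ k) / (1 - b) +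
        m ^ 2 * d' * c * (a ^ k - b ^ k) / ((a - b) * (a - 1)) := by
    intro k
    induction k with
    | zero => intro _; constructor <;> simp [hq0, he0, euclNorm_zero]
    | succ k ih =>
      intro hk1
      have hk : k < L := hk1
      obtain ⟨ihq, ihe⟩ := ih (le_of_lt hk)
      have hqnn := euclNorm_nonneg (q k)
      have henn := euclNorm_nonneg (e k)
      set kf : Fin L := ⟨k, hk⟩ with hkf
      have hkc : (kf : ℕ) = k := rfl
      constructor
      · -- bound on q (k+1)
        have step1 : euclNorm (q (k + 1)) ≤ m * (euclNorm (C₁.mulVec (q k)) + euclNorm c₂) := by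
          have h0 : q (k + 1) = (M kf).mulVec (C₁.mulVec (q k) + c₂) := by
            have := hq kf; rwa [hkc] at this
          rw [h0]
          calc euclNorm ((M kf).mulVec (C₁.mulVec (q k) + c₂))
              ≤ ‖M kf‖ * euclNorm (C₁.mulVec (q k) + c₂) := euclNorm_mulVec _ _
            _ ≤ m * (euclNorm (C₁.mulVec (q k)) + euclNorm c₂) := by
                apply mul_le_mul (hM kf) (euclNorm_add_le _ _)
                  (euclNorm_nonneg _) hm
        have step2 : euclNorm (C₁.mulVec (q k)) ≤ p * (m * c * (a ^ k - 1) / (a - 1)) := by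
          calc euclNorm (C₁.mulVec (q k)) ≤ ‖C₁‖ * euclNorm (q k) := euclNorm_mulVec _ _
            _ ≤ p * (m * c * (a ^ k - 1) / (a - 1)) :=
                mul_le_mul hC₁ ihq hqnn hp
        have heq : m * (p * (m * c * (a ^ k - 1) / (a - 1)) + c)
            = m * c * (a ^ (k + 1) - 1) / (a - 1) := by
          field_simp
          ring
        calc euclNorm (q (k + 1)) ≤ m * (euclNorm (C₁.mulVec (q k)) + euclNorm c₂) := step1
          _ ≤ m * (p * (m * c * (a ^ k - 1) / (a - 1)) + c) := by
              apply mul_le_mul_of_nonneg_left _ hm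
              exact add_le_add step2 hc₂
          _ = m * c * (a ^ (k + 1) - 1) / (a - 1) := heq
      · -- bound on e (k+1)
        have h0 : e (k + 1) = (M kf * (C₁ + ΔC₁)).mulVec (e k)
            + (M kf * ΔC₁).mulVec (q k) + (M kf).mulVec Δc₂ := by
          have := he kf; rwa [hkc] at this
        have t1 : euclNorm ((M kf * (C₁ + ΔC₁)).mulVec (e k)) ≤ b * euclNorm (e k) := by
          calc euclNorm ((M kf * (C₁ + ΔC₁)).mulVec (e k))
              ≤ ‖M kf * (C₁ + ΔC₁)‖ * euclNorm (e k) := euclNorm_mulVec _ _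
            _ ≤ (m * t) * euclNorm (e k) := by
                apply mul_le_mul_of_nonneg_right _ henn
                calc ‖M kf * (C₁ + ΔC₁)‖ ≤ ‖M kf‖ * ‖C₁ + ΔC₁‖ := Matrix.l2_opNorm_mul _ _
                  _ ≤ m * t := mul_le_mul (hM kf) hCt (norm_nonneg _) hm
        have t2 : euclNorm ((M kf * ΔC₁).mulVec (q k)) ≤ (m * d') * euclNorm (q k) := by
          calc euclNorm ((M kf * ΔC₁).mulVec (q k))
              ≤ ‖M kf * ΔC₁‖ * euclNorm (q k) := euclNorm_mulVec _ _
            _ ≤ (m * d') * euclNorm (q k) := by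
                apply mul_le_mul_of_nonneg_right _ hqnn
                calc ‖M kf * ΔC₁‖ ≤ ‖M kf‖ * ‖ΔC₁‖ := Matrix.l2_opNorm_mul _ _
                  _ ≤ m * d' := mul_le_mul (hM kf) hΔC₁ (norm_nonneg _) hm
        have t3 : euclNorm ((M kf).mulVec Δc₂) ≤ m * s := by
          calc euclNorm ((M kf).mulVec Δc₂) ≤ ‖M kf‖ * euclNorm Δc₂ := euclNorm_mulVec _ _
            _ ≤ m * s := mul_le_mul (hM kf) hΔc₂ (euclNorm_nonneg _) hm
        have tri : euclNorm (e (k + 1)) ≤ euclNorm ((M kf * (C₁ + ΔC₁)).mulVec (e k))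
            + euclNorm ((M kf * ΔC₁).mulVec (q k)) + euclNorm ((M kf).mulVec Δc₂) := by
          rw [h0]
          calc euclNorm ((M kf * (C₁ + ΔC₁)).mulVec (e k) + (M kf * ΔC₁).mulVec (q k)
                + (M kf).mulVec Δc₂)
              ≤ euclNorm ((M kf * (C₁ + ΔC₁)).mulVec (e k) + (M kf * ΔC₁).mulVec (q k))
                + euclNorm ((M kf).mulVec Δc₂) := euclNorm_add_le _ _
            _ ≤ _ := by
                have := euclNorm_add_le ((M kf * (C₁ + ΔC₁)).mulVec (e k))
                  ((M kf * ΔC₁).mulVec (q k))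
                linarith
        have step : euclNorm (e (k + 1)) ≤
            b * (m * s * (1 - b ^ k) / (1 - b) +
              m ^ 2 * d' * c * (a ^ k - b ^ k) / ((a - b) * (a - 1)))
            + (m * d') * (m * c * (a ^ k - 1) / (a - 1)) + m * s := by
          have hb1 : b * euclNorm (e k) ≤ b * (m * s * (1 - b ^ k) / (1 - b) +
              m ^ 2 * d' * c * (a ^ k - b ^ k) / ((a - b) * (a - 1))) :=
            mul_le_mul_of_nonneg_left ihe hb0
          have hq1 : (m * d') * euclNorm (q k) ≤ (m * d') * (m * c * (a ^ k - 1) / (a - 1)) :=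
            mul_le_mul_of_nonneg_left ihq (mul_nonneg hm hd')
          linarith
        have hdiff : (m * s * (1 - b ^ (k + 1)) / (1 - b) +
              m ^ 2 * d' * c * (a ^ (k + 1) - b ^ (k + 1)) / ((a - b) * (a - 1)))
            - (b * (m * s * (1 - b ^ k) / (1 - b) +
              m ^ 2 * d' * c * (a ^ k - b ^ k) / ((a - b) * (a - 1)))
              + (m * d') * (m * c * (a ^ k - 1) / (a - 1)) + m * s)
            = m ^ 2 * d' * c / (a - 1) := by
          field_simp
          ring
        have hslack : 0 ≤ m ^ 2 * d' * c / (a - 1) := by positivity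
        linarith
  have := (main L le_rfl).2
  simpa using this
end
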